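/- Let f : ℝⁿ → ℝ be twice continuously differentiable and suppose there are constants 0 < Λ₂ ≤ Λ₁, a point x* ∈ ℝⁿ, and ρ > 0 such that Λ₂‖v‖² ≤ vᵀ∇²f(y)v ≤ Λ₁‖v‖² for all v ∈ ℝⁿ and all y in the closed ball B_ρ(x*). Let x ∈ B_ρ(x*) with ∇f(x) ≠ 0 and Δτ > 0 be such that x_new = x − Δτ ∇f(x) ∈ B_ρ(x*). Then the long KGD step-size satisfies 1/Λ₁ ≤ K1(x_new; x, Δτ) ≤ 1/Λ₂. -/

import Mathlib

open scoped RealInnerProductSpace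

variable {n : ℕ}

private lemma grad_contDiff {f : EuclideanSpace ℝ (Fin n) → ℝ} (hf : ContDiff ℝ 2 f) :
    ContDiff ℝ 1 (gradient f) := by
  have h1 : ContDiff ℝ 1 (fderiv ℝ f) := hf.fderiv_right (by norm_num)
  have h2 := (InnerProductSpace.toDual ℝ (EuclideanSpace ℝ (Fin n))).symm.contDiff.comp h1
  exact h2

private lemma line_deriv (x d : EuclideanSpace ℝ (Fin n)) (t : ℝ) :
    HasDerivAt (fun t : ℝ => x + t • d) d t := by
  simpa using ((hasDerivAt_id t).smul_const d).const_add x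

private lemma f_line_deriv {f : EuclideanSpace ℝ (Fin n) → ℝ} (hf : ContDiff ℝ 2 f)
    (x d : EuclideanSpace ℝ (Fin n)) (t : ℝ) :
    HasDerivAt (fun t : ℝ => f (x + t • d)) ⟪d, gradient f (x + t • d)⟫ t := by
  have hfd : DifferentiableAt ℝ f (x + t • d) :=
    (hf.differentiable (by norm_num)) _
  have := hfd.hasGradientAt.hasFDerivAt.comp_hasDerivAt t (line_deriv x d t)
  rw [real_inner_comm]
  exact this

private lemma g_line_deriv {f : EuclideanSpace ℝ (Fin n) → ℝ} (hf : ContDiff ℝ 2 f)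
    (x d : EuclideanSpace ℝ (Fin n)) (t : ℝ) :
    HasDerivAt (fun t : ℝ => ⟪d, gradient f (x + t • d)⟫)
      ⟪d, fderiv ℝ (gradient f) (x + t • d) d⟫ t := by
  have hgd : DifferentiableAt ℝ (gradient f) (x + t • d) :=
    ((grad_contDiff hf).differentiable (by norm_num)) _
  have hg : HasDerivAt (fun t : ℝ => gradient f (x + t • d))
      (fderiv ℝ (gradient f) (x + t • d) d) t :=
    by have := hgd.hasFDerivAt.comp_hasDerivAt t (line_deriv x d t); exact this
  exact (innerSL ℝ d).hasFDerivAt.comp_hasDerivAt t hg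

private lemma taylor_lower {f : EuclideanSpace ℝ (Fin n) → ℝ} (hf : ContDiff ℝ 2 f)
    (x d : EuclideanSpace ℝ (Fin n)) (c : ℝ)
    (h : ∀ t ∈ Set.Icc (0:ℝ) 1,
      c * ‖d‖ ^ 2 ≤ ⟪d, fderiv ℝ (gradient f) (x + t • d) d⟫) :
    f x + ⟪d, gradient f x⟫ + c / 2 * ‖d‖ ^ 2 ≤ f (x + d) := by
  set φ : ℝ → ℝ := fun t => ⟪d, gradient f (x + t • d)⟫ - c * ‖d‖ ^ 2 * t with hφdef
  have hφ : ∀ t : ℝ, HasDerivAt φ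
      (⟪d, fderiv ℝ (gradient f) (x + t • d) d⟫ - c * ‖d‖ ^ 2) t := by
    intro t
    have := (g_line_deriv hf x d t).sub ((hasDerivAt_id t).const_mul (c * ‖d‖ ^ 2))
    simp only [id_eq, mul_one] at this
    exact this
  have hφmono : MonotoneOn φ (Set.Icc 0 1) := by
    apply monotoneOn_of_deriv_nonneg (convex_Icc 0 1)
    · exact (Differentiable.continuous fun t => (hφ t).differentiableAt).continuousOn
    · exact fun t _ => ((hφ t).differentiableAt).differentiableWithinAt
    · intro t ht
      rw [interior_Icc] at ht
      rw [(hφ t).deriv]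
      have := h t ⟨le_of_lt ht.1, le_of_lt ht.2⟩
      linarith
  have hφ0 : ∀ t ∈ Set.Icc (0:ℝ) 1, φ 0 ≤ φ t := fun t ht =>
    hφmono (Set.left_mem_Icc.2 zero_le_one) ht ht.1
  set F : ℝ → ℝ := fun t => f (x + t • d) - (φ 0 * t + c * ‖d‖ ^ 2 * t ^ 2 / 2) with hFdef
  have hF : ∀ t : ℝ, HasDerivAt F (φ t - φ 0) t := by
    intro t
    have h2 : HasDerivAt (fun t : ℝ => φ 0 * t + c * ‖d‖ ^ 2 * t ^ 2 / 2)
        (φ 0 + c * ‖d‖ ^ 2 * t) t := by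
      have := ((hasDerivAt_id t).const_mul (φ 0)).add
        (((hasDerivAt_pow 2 t).const_mul (c * ‖d‖ ^ 2)).div_const 2)
      exact this.congr_deriv (by norm_num; ring)
    have := (f_line_deriv hf x d t).sub h2
    exact this.congr_deriv (by simp only [hφdef]; ring)
  have hFmono : MonotoneOn F (Set.Icc 0 1) := by
    apply monotoneOn_of_deriv_nonneg (convex_Icc 0 1)
    · exact (Differentiable.continuous fun t => (hF t).differentiableAt).continuousOn
    · exact fun t _ => ((hF t).differentiableAt).differentiableWithinAt
    · intro t ht
      rw [interior_Icc] at ht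
      rw [(hF t).deriv]
      have := hφ0 t ⟨le_of_lt ht.1, le_of_lt ht.2⟩
      linarith
  have := hFmono (Set.left_mem_Icc.2 zero_le_one) (Set.right_mem_Icc.2 zero_le_one)
    zero_le_one
  simp only [hFdef, hφdef, zero_smul, add_zero, one_smul, one_pow, mul_one, mul_zero,
    zero_pow, zero_div, sub_zero, add_zero] at this
  linarith

private lemma taylor_upper {f : EuclideanSpace ℝ (Fin n) → ℝ} (hf : ContDiff ℝ 2 f)
    (x d : EuclideanSpace ℝ (Fin n)) (c : ℝ)
    (h : ∀ t ∈ Set.Icc (0:ℝ) 1,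
      ⟪d, fderiv ℝ (gradient f) (x + t • d) d⟫ ≤ c * ‖d‖ ^ 2) :
    f (x + d) ≤ f x + ⟪d, gradient f x⟫ + c / 2 * ‖d‖ ^ 2 := by
  set φ : ℝ → ℝ := fun t => ⟪d, gradient f (x + t • d)⟫ - c * ‖d‖ ^ 2 * t with hφdef
  have hφ : ∀ t : ℝ, HasDerivAt φ
      (⟪d, fderiv ℝ (gradient f) (x + t • d) d⟫ - c * ‖d‖ ^ 2) t := by
    intro t
    have := (g_line_deriv hf x d t).sub ((hasDerivAt_id t).const_mul (c * ‖d‖ ^ 2))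
    simp only [id_eq, mul_one] at this
    exact this
  have hφmono : AntitoneOn φ (Set.Icc 0 1) := by
    apply antitoneOn_of_deriv_nonpos (convex_Icc 0 1)
    · exact (Differentiable.continuous fun t => (hφ t).differentiableAt).continuousOn
    · exact fun t _ => ((hφ t).differentiableAt).differentiableWithinAt
    · intro t ht
      rw [interior_Icc] at ht
      rw [(hφ t).deriv]
      have := h t ⟨le_of_lt ht.1, le_of_lt ht.2⟩
      linarith
  have hφ0 : ∀ t ∈ Set.Icc (0:ℝ) 1, φ t ≤ φ 0 := fun t ht =>
    hφmono (Set.left_mem_Icc.2 zero_le_one) ht ht.1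
  set F : ℝ → ℝ := fun t => f (x + t • d) - (φ 0 * t + c * ‖d‖ ^ 2 * t ^ 2 / 2) with hFdef
  have hF : ∀ t : ℝ, HasDerivAt F (φ t - φ 0) t := by
    intro t
    have h2 : HasDerivAt (fun t : ℝ => φ 0 * t + c * ‖d‖ ^ 2 * t ^ 2 / 2)
        (φ 0 + c * ‖d‖ ^ 2 * t) t := by
      have := ((hasDerivAt_id t).const_mul (φ 0)).add
        (((hasDerivAt_pow 2 t).const_mul (c * ‖d‖ ^ 2)).div_const 2)
      exact this.congr_deriv (by norm_num; ring)
    have := (f_line_deriv hf x d t).sub h2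
    exact this.congr_deriv (by simp only [hφdef]; ring)
  have hFmono : AntitoneOn F (Set.Icc 0 1) := by
    apply antitoneOn_of_deriv_nonpos (convex_Icc 0 1)
    · exact (Differentiable.continuous fun t => (hF t).differentiableAt).continuousOn
    · exact fun t _ => ((hF t).differentiableAt).differentiableWithinAt
    · intro t ht
      rw [interior_Icc] at ht
      rw [(hF t).deriv]
      have := hφ0 t ⟨le_of_lt ht.1, le_of_lt ht.2⟩
      linarith
  have := hFmono (Set.left_mem_Icc.2 zero_le_one) (Set.right_mem_Icc.2 zero_le_one)
    zero_le_one
  simp only [hFdef, hφdef, zero_smul, add_zero, one_smul, one_pow, mul_one, mul_zero,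
    zero_pow, zero_div, sub_zero, add_zero] at this
  linarith

/-- The long KGD step-size
`K1(x_new; x, α) = α / (2 + 2(f(x_new) − f(x))/(α ‖G(x)‖²))` with `x_new = x − α G(x)`. -/
noncomputable def K1 {n : ℕ} (f : EuclideanSpace ℝ (Fin n) → ℝ)
    (G : EuclideanSpace ℝ (Fin n) → EuclideanSpace ℝ (Fin n))
    (x : EuclideanSpace ℝ (Fin n)) (α : ℝ) : ℝ :=
  α / (2 + 2 * (f (x - α • G x) - f x) / (α * ‖G x‖ ^ 2))

/-- Under two-sided Hessian bounds `Λ₂‖v‖² ≤ vᵀ∇²f(y)v ≤ Λ₁‖v‖²` on the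
closed ball `B_ρ(x*)`, the long KGD step-size satisfies `1/Λ₁ ≤ K1 ≤ 1/Λ₂`. -/
theorem stmt_15 {n : ℕ} (f : EuclideanSpace ℝ (Fin n) → ℝ) (hf : ContDiff ℝ 2 f)
    (xs : EuclideanSpace ℝ (Fin n))
    (Λ₁ Λ₂ ρ : ℝ) (hΛ₂ : 0 < Λ₂) (hΛ : Λ₂ ≤ Λ₁) (hρ : 0 < ρ)
    (hHess : ∀ y ∈ Metric.closedBall xs ρ, ∀ v : EuclideanSpace ℝ (Fin n),
      Λ₂ * ‖v‖ ^ 2 ≤ ⟪v, fderiv ℝ (gradient f) y v⟫ ∧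
        ⟪v, fderiv ℝ (gradient f) y v⟫ ≤ Λ₁ * ‖v‖ ^ 2)
    (x : EuclideanSpace ℝ (Fin n)) (hx : x ∈ Metric.closedBall xs ρ)
    (hGx : gradient f x ≠ 0)
    (Δτ : ℝ) (hΔτ : 0 < Δτ)
    (hnew : x - Δτ • gradient f x ∈ Metric.closedBall xs ρ) :
    1 / Λ₁ ≤ K1 f (gradient f) x Δτ ∧ K1 f (gradient f) x Δτ ≤ 1 / Λ₂ := by
  have hΛ₁ : 0 < Λ₁ := lt_of_lt_of_le hΛ₂ hΛ
  set G := gradient f x with hG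
  set d : EuclideanSpace ℝ (Fin n) := -(Δτ • G) with hd
  have hxd : x + d = x - Δτ • G := by rw [hd, sub_eq_add_neg]
  have hseg : ∀ t ∈ Set.Icc (0:ℝ) 1, x + t • d ∈ Metric.closedBall xs ρ := by
    intro t ht
    have := (convex_closedBall xs ρ).add_smul_sub_mem hx (hxd ▸ hnew) ht
    simpa using this
  have hHl : ∀ t ∈ Set.Icc (0:ℝ) 1,
      Λ₂ * ‖d‖ ^ 2 ≤ ⟪d, fderiv ℝ (gradient f) (x + t • d) d⟫ :=
    fun t ht => (hHess _ (hseg t ht) d).1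
  have hHu : ∀ t ∈ Set.Icc (0:ℝ) 1,
      ⟪d, fderiv ℝ (gradient f) (x + t • d) d⟫ ≤ Λ₁ * ‖d‖ ^ 2 :=
    fun t ht => (hHess _ (hseg t ht) d).2
  have hlow := taylor_lower hf x d Λ₂ hHl
  have hup := taylor_upper hf x d Λ₁ hHu
  set N : ℝ := ‖G‖ ^ 2 with hN
  have hNpos : 0 < N := pow_pos (norm_pos_iff.2 hGx) 2
  have hdG : ⟪d, G⟫ = -(Δτ * N) := by
    rw [hd, inner_neg_left, real_inner_smul_left, real_inner_self_eq_norm_sq, hN]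
  have hdn : ‖d‖ ^ 2 = Δτ ^ 2 * N := by
    rw [hd, norm_neg, norm_smul, Real.norm_eq_abs, abs_of_pos hΔτ, hN]
    ring
  rw [hdG, hdn] at hlow hup
  have hpos : 0 < Δτ * N := by positivity
  set A : ℝ := f (x - Δτ • G) - f x with hA
  have hfxd : f (x + d) = f (x - Δτ • G) := by rw [hxd]
  rw [hfxd] at hlow hup
  have hK : K1 f (gradient f) x Δτ = Δτ / (2 + 2 * A / (Δτ * N)) := rfl
  have hDlo : Λ₂ * Δτ ≤ 2 + 2 * A / (Δτ * N) := by
    rw [← sub_nonneg]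
    have : 2 + 2 * A / (Δτ * N) - Λ₂ * Δτ =
        (2 * (Δτ * N) + 2 * A - Λ₂ * Δτ * (Δτ * N)) / (Δτ * N) := by
      field_simp
    rw [this]
    apply div_nonneg _ (le_of_lt hpos)
    nlinarith
  have hDhi : 2 + 2 * A / (Δτ * N) ≤ Λ₁ * Δτ := by
    rw [← sub_nonneg]
    have : Λ₁ * Δτ - (2 + 2 * A / (Δτ * N)) =
        (Λ₁ * Δτ * (Δτ * N) - (2 * (Δτ * N) + 2 * A)) / (Δτ * N) := by
      field_simp
    rw [this]
    apply div_nonneg _ (le_of_lt hpos)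
    nlinarith
  have hDpos : 0 < 2 + 2 * A / (Δτ * N) := lt_of_lt_of_le (by positivity) hDlo
  rw [hK]
  constructor
  · rw [div_le_div_iff₀ hΛ₁ hDpos, one_mul]
    linarith [hDhi]
  · rw [div_le_div_iff₀ hDpos hΛ₂, one_mul]
    linarith [hDlo]
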